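/- Nonlinear uniform boundedness theorem: Let {F_α}_{α∈I} be a family of continuous M-contraction operators from a Banach space X into a normed space Y such that (a) for each x ∈ X the set {||F_α(x)||_Y : α ∈ I} is bounded, and (b) there is a constant L > 0 with ||F_α(x₁+x₂)||_Y ≤ L·||F_α(x₁)+F_α(x₂)||_Y for all α and all x₁, x₂ ∈ X. Then {F_α} is uniformly norm bounded: there is c > 0 with ||F_α||_{B(X,Y)} ≤ c for all α ∈ I. -/

import Mathlib

open scoped ENNReal NNReal

/-- The (possibly infinite) norm `p(F) = max(sup_{x ≠ 0} ‖F x‖ / ‖x‖, ‖F 0‖)` on maps. -/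
noncomputable def pm {X Y : Type*} [NormedAddCommGroup X] [NormedAddCommGroup Y]
    (F : X → Y) : ℝ≥0∞ :=
  max (⨆ x : {x : X // x ≠ 0}, (‖F x.1‖₊ : ℝ≥0∞) / (‖x.1‖₊ : ℝ≥0∞)) (‖F 0‖₊ : ℝ≥0∞)

/-- Nonlinear uniform boundedness theorem: a pointwise bounded family of continuous
`M`-contraction operators from a Banach space satisfying the `L`-subadditivity condition
is uniformly norm bounded. -/
theorem stmt6 {𝕜 X Y I : Type*} [RCLike 𝕜] [NormedAddCommGroup X] [NormedSpace 𝕜 X]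
    [CompleteSpace X] [NormedAddCommGroup Y] [NormedSpace 𝕜 Y]
    (F : I → X → Y) (M : ℝ) (hM : 0 < M)
    (hcont : ∀ α, Continuous (F α))
    (hcontr : ∀ α, ∀ k : 𝕜, k ≠ 0 → ∀ x : X, x ≠ 0 → ‖F α (k • x)‖ ≤ M * ‖k‖ * ‖F α x‖)
    (hpt : ∀ x : X, ∃ c : ℝ, ∀ α, ‖F α x‖ ≤ c)
    (L : ℝ) (hL : 0 < L)
    (hsub : ∀ α, ∀ x₁ x₂ : X, ‖F α (x₁ + x₂)‖ ≤ L * ‖F α x₁ + F α x₂‖) :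
    ∃ c : ℝ≥0, 0 < c ∧ ∀ α, pm (F α) ≤ (c : ℝ≥0∞) := by
  classical
  set E : ℕ → Set X := fun n => {x | ∀ α, ‖F α x‖ ≤ n} with hE
  have hEc : ∀ n, IsClosed (E n) := by
    intro n
    have : E n = ⋂ α, {x | ‖F α x‖ ≤ n} := by
      ext x; simp [hE, Set.mem_iInter]
    rw [this]
    exact isClosed_iInter fun α => isClosed_le ((hcont α).norm) continuous_const
  have hEu : ⋃ n, E n = Set.univ := by
    ext x
    simp only [Set.mem_iUnion, Set.mem_univ, iff_true]
    obtain ⟨c, hc⟩ := hpt x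
    exact ⟨⌈c⌉₊, fun α => (hc α).trans (Nat.le_ceil c)⟩
  obtain ⟨n, x₀, hx₀⟩ := nonempty_interior_of_iUnion_of_closed hEc hEu
  obtain ⟨r, hr, hball⟩ := Metric.isOpen_iff.1 isOpen_interior x₀ hx₀
  have hball' : Metric.ball x₀ r ⊆ E n := hball.trans interior_subset
  have hx₀n : ∀ α, ‖F α x₀‖ ≤ n := hball' (Metric.mem_ball_self hr)
  have hneg : ∀ α, ‖F α (-x₀)‖ ≤ max 1 M * n := by
    intro α
    by_cases h0 : x₀ = 0
    · subst h0
      simp only [neg_zero]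
      calc ‖F α (0 : X)‖ ≤ n := hx₀n α
        _ ≤ max 1 M * n := by nlinarith [le_max_left 1 M]
    · have h := hcontr α (-1 : 𝕜) (by norm_num) x₀ h0
      rw [neg_one_smul] at h
      calc ‖F α (-x₀)‖ ≤ M * ‖(-1 : 𝕜)‖ * ‖F α x₀‖ := h
        _ = M * ‖F α x₀‖ := by simp
        _ ≤ M * n := by nlinarith [hx₀n α]
        _ ≤ max 1 M * n := by nlinarith [le_max_right 1 M]
  set C : ℝ := L * ((n : ℝ) + max 1 M * n) with hC
  have hCnn : 0 ≤ C := by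
    have : (0:ℝ) ≤ max 1 M := le_trans zero_le_one (le_max_left 1 M)
    positivity
  have hsmall : ∀ α, ∀ z : X, ‖z‖ ≤ r / 2 → ‖F α z‖ ≤ C := by
    intro α z hz
    have hmem : x₀ + z ∈ E n := by
      apply hball'
      rw [Metric.mem_ball, dist_eq_norm, add_sub_cancel_left]
      linarith
    have hzeq : z = (x₀ + z) + (-x₀) := by abel
    calc ‖F α z‖ = ‖F α ((x₀ + z) + (-x₀))‖ := by rw [← hzeq]
      _ ≤ L * ‖F α (x₀ + z) + F α (-x₀)‖ := hsub α _ _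
      _ ≤ L * (‖F α (x₀ + z)‖ + ‖F α (-x₀)‖) := by
          exact mul_le_mul_of_nonneg_left (norm_add_le _ _) hL.le
      _ ≤ C := by
          have h1 := hmem α
          have h2 := hneg α
          rw [hC]
          nlinarith
  have hC0 : ∀ α, ‖F α 0‖ ≤ C := fun α => hsmall α 0 (by simp; positivity)
  have hgen : ∀ α, ∀ x : X, x ≠ 0 → ‖F α x‖ ≤ (2 * M * C / r) * ‖x‖ := by
    intro α x hx
    have hxn : 0 < ‖x‖ := norm_pos_iff.2 hx
    set t : ℝ := r / (2 * ‖x‖) with ht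
    have htpos : 0 < t := div_pos hr (by positivity)
    set y : X := ((t : 𝕜)) • x with hy
    have htne : ((t : 𝕜)) ≠ 0 := by
      simpa using htpos.ne'
    have hyne : y ≠ 0 := smul_ne_zero htne hx
    have hynorm : ‖y‖ = r / 2 := by
      rw [hy, norm_smul, RCLike.norm_ofReal, abs_of_pos htpos, ht]
      field_simp
    have hxy : x = ((t⁻¹ : ℝ) : 𝕜) • y := by
      rw [hy, smul_smul, ← RCLike.ofReal_mul, inv_mul_cancel₀ htpos.ne',
        RCLike.ofReal_one, one_smul]
    have h1 := hcontr α ((t⁻¹ : ℝ) : 𝕜) (by simpa using (inv_pos.2 htpos).ne') y hyne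
    rw [← hxy] at h1
    have hnorminv : ‖((t⁻¹ : ℝ) : 𝕜)‖ = t⁻¹ := by
      rw [RCLike.norm_ofReal, abs_of_pos (inv_pos.2 htpos)]
    have h2 : ‖F α y‖ ≤ C := hsmall α y hynorm.le
    have htinv : t⁻¹ = 2 * ‖x‖ / r := by
      rw [ht]; field_simp
    calc ‖F α x‖ ≤ M * ‖((t⁻¹ : ℝ) : 𝕜)‖ * ‖F α y‖ := h1
      _ = M * (2 * ‖x‖ / r) * ‖F α y‖ := by rw [hnorminv, htinv]
      _ ≤ M * (2 * ‖x‖ / r) * C := by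
          apply mul_le_mul_of_nonneg_left h2
          positivity
      _ = (2 * M * C / r) * ‖x‖ := by field_simp
  set cR : ℝ := max (max (2 * M * C / r) C) 1 with hcR
  have hcR1 : (1 : ℝ) ≤ cR := le_max_right _ _
  have hcRnn : (0 : ℝ) ≤ cR := zero_le_one.trans hcR1
  refine ⟨cR.toNNReal, ?_, fun α => ?_⟩
  · exact Real.toNNReal_pos.2 (lt_of_lt_of_le zero_lt_one hcR1)
  · rw [pm, max_le_iff]
    constructor
    · refine iSup_le fun x => ?_
      rw [ENNReal.div_le_iff (by simpa using x.2) ENNReal.coe_ne_top,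
        ← ENNReal.coe_mul, ENNReal.coe_le_coe, ← NNReal.coe_le_coe, NNReal.coe_mul, Real.coe_toNNReal _ hcRnn]
      push_cast
      calc ‖F α x.1‖ ≤ (2 * M * C / r) * ‖x.1‖ := hgen α x.1 x.2
        _ ≤ cR * ‖x.1‖ := by
            apply mul_le_mul_of_nonneg_right _ (norm_nonneg _)
            exact (le_max_left _ _).trans (le_max_left _ _)
    · rw [ENNReal.coe_le_coe, ← NNReal.coe_le_coe, Real.coe_toNNReal _ hcRnn]
      push_cast
      exact (hC0 α).trans ((le_max_right _ _).trans (le_max_left _ _))
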